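/- Let φ : ℂ → ℂ be entire, let a, b, c, d, e ∈ ℂ, and let α(x) = a + bx + cx² + dx³ + ex⁴. Then the coefficient E_{5,3}(α,φ) of y³ in X_h⁵α vanishes identically on ℂ if and only if φ satisfies the linear fourth-order ODE (L): (4ex³ + 3dx² + 2cx + b)·φ⁗ + (60ex² + 30dx + 10c)·φ''' + (240ex + 60d)·φ'' + 240e·φ' = 0 at every x ∈ ℂ. -/

import Mathlib

private lemma linHD (q0 q1 x : ℂ) :
    HasDerivAt (fun y : ℂ => q0 + q1 * y) q1 x := by
  have h := (hasDerivAt_const x q0).add ((hasDerivAt_id' (𝕜 := ℂ) x).const_mul q1)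
  exact h.congr_deriv (by ring)

private lemma quadHD (q0 q1 q2 x : ℂ) :
    HasDerivAt (fun y : ℂ => q0 + q1 * y + q2 * y ^ 2) (q1 + 2 * q2 * x) x := by
  have h := ((hasDerivAt_const x q0).add ((hasDerivAt_id' (𝕜 := ℂ) x).const_mul q1)).add
    ((hasDerivAt_pow 2 x).const_mul q2)
  exact h.congr_deriv (by push_cast; ring)

private lemma cubicHD (q0 q1 q2 q3 x : ℂ) :
    HasDerivAt (fun y : ℂ => q0 + q1 * y + q2 * y ^ 2 + q3 * y ^ 3)
      (q1 + 2 * q2 * x + 3 * q3 * x ^ 2) x := by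
  have h := (((hasDerivAt_const x q0).add ((hasDerivAt_id' (𝕜 := ℂ) x).const_mul q1)).add
    ((hasDerivAt_pow 2 x).const_mul q2)).add ((hasDerivAt_pow 3 x).const_mul q3)
  exact h.congr_deriv (by push_cast; ring)

private lemma quarticHD (q0 q1 q2 q3 q4 x : ℂ) :
    HasDerivAt (fun y : ℂ => q0 + q1 * y + q2 * y ^ 2 + q3 * y ^ 3 + q4 * y ^ 4)
      (q1 + 2 * q2 * x + 3 * q3 * x ^ 2 + 4 * q4 * x ^ 3) x := by
  have h := ((((hasDerivAt_const x q0).add ((hasDerivAt_id' (𝕜 := ℂ) x).const_mul q1)).add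
    ((hasDerivAt_pow 2 x).const_mul q2)).add ((hasDerivAt_pow 3 x).const_mul q3)).add
    ((hasDerivAt_pow 4 x).const_mul q4)
  exact h.congr_deriv (by push_cast; ring)

/-- Let `φ : ℂ → ℂ` be entire and `α(x) = a + bx + cx² + dx³ + ex⁴`.
With `E n k` defined by the usual recurrence, the coefficient `E 5 3` of `y³` in
`X_h⁵α` vanishes identically iff `φ` satisfies the linear fourth-order ODE (L):
`(4ex³+3dx²+2cx+b)φ⁗ + (60ex²+30dx+10c)φ''' + (240ex+60d)φ'' + 240eφ' = 0`. -/
theorem statement7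
    (φ : ℂ → ℂ) (hφ : Differentiable ℂ φ)
    (a b c d e : ℂ)
    (α : ℂ → ℂ)
    (hα : ∀ x : ℂ, α x = a + b * x + c * x ^ 2 + d * x ^ 3 + e * x ^ 4)
    (E : ℕ → ℤ → ℂ → ℂ)
    (hE11 : ∀ x : ℂ, E 1 1 x = deriv α x)
    (hE1k : ∀ k : ℤ, k ≠ 1 → ∀ x : ℂ, E 1 k x = 0)
    (hErec : ∀ n : ℕ, 1 ≤ n → ∀ (k : ℤ) (x : ℂ),
      E (n + 1) k x = deriv (E n (k - 1)) x - ((k : ℂ) + 1) * E n (k + 1) x * deriv φ x) :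
    (∀ x : ℂ, E 5 3 x = 0) ↔
      ∀ x : ℂ,
        (4 * e * x ^ 3 + 3 * d * x ^ 2 + 2 * c * x + b) * iteratedDeriv 4 φ x
          + (60 * e * x ^ 2 + 30 * d * x + 10 * c) * iteratedDeriv 3 φ x
          + (240 * e * x + 60 * d) * iteratedDeriv 2 φ x
          + 240 * e * deriv φ x = 0 := by
  have hαf : α = fun x => a + b * x + c * x ^ 2 + d * x ^ 3 + e * x ^ 4 := funext hα
  subst hαf
  have hc : ContDiff ℂ (⊤ : ℕ∞) φ := hφ.contDiff
  have hdi : ∀ i : ℕ, Differentiable ℂ (iteratedDeriv i φ) := by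
    intro i
    rw [iteratedDeriv_eq_iterate]
    exact (ContDiff.iterate_deriv i hc).differentiable (by simp)
  have hDφ : ∀ (i : ℕ) (x : ℂ),
      HasDerivAt (iteratedDeriv i φ) (iteratedDeriv (i + 1) φ x) x := by
    intro i x
    rw [iteratedDeriv_succ]
    exact ((hdi i) x).hasDerivAt
  have hφ1 : deriv φ = iteratedDeriv 1 φ := (iteratedDeriv_one (f := φ)).symm
  -- level 1
  have h11 : E 1 1 = fun x => b + 2 * c * x + 3 * d * x ^ 2 + 4 * e * x ^ 3 :=
    funext fun x => by rw [hE11 x, (quarticHD a b c d e x).deriv]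
  have hz : ∀ k : ℤ, k ≠ 1 → E 1 k = fun _ => (0 : ℂ) :=
    fun k hk => funext (hE1k k hk)
  -- level 2
  have h22 : E 2 2 = fun x => 2 * c + 6 * d * x + 12 * e * x ^ 2 := by
    funext x
    have h := hErec 1 le_rfl 2 x
    rw [show (2 : ℤ) - 1 = 1 from rfl, show (2 : ℤ) + 1 = 3 from rfl, hE1k 3 (by decide) x,
      h11] at h
    rw [h, (cubicHD b (2 * c) (3 * d) (4 * e) x).deriv]
    push_cast; ring
  have h20 : E 2 0 = fun x =>
      -((b + 2 * c * x + 3 * d * x ^ 2 + 4 * e * x ^ 3) * iteratedDeriv 1 φ x) := by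
    funext x
    have h := hErec 1 le_rfl 0 x
    rw [show (0 : ℤ) - 1 = -1 from rfl, show (0 : ℤ) + 1 = 1 from rfl,
      hz (-1) (by decide), hE11, hφ1] at h
    rw [h, deriv_const, (quarticHD a b c d e x).deriv]
    push_cast; ring
  have h2z : ∀ k : ℤ, k ≠ 0 → k ≠ 2 → E 2 k = fun _ => (0 : ℂ) := by
    intro k hk0 hk2
    funext x
    have h := hErec 1 le_rfl k x
    rw [hz (k - 1) (by omega), hE1k (k + 1) (by omega) x, deriv_const] at h
    rw [h]; ring
  -- level 3
  have h33 : E 3 3 = fun x => 6 * d + 24 * e * x := by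
    funext x
    have h := hErec 2 (by norm_num) 3 x
    rw [show (3 : ℤ) - 1 = 2 from rfl, show (3 : ℤ) + 1 = 4 from rfl, h22, h2z 4 (by decide) (by decide)] at h
    rw [h, (quadHD (2 * c) (6 * d) (12 * e) x).deriv]
    push_cast; ring
  have h31 : E 3 1 = fun x =>
      -(3 * ((2 * c + 6 * d * x + 12 * e * x ^ 2) * iteratedDeriv 1 φ x)
        + (b + 2 * c * x + 3 * d * x ^ 2 + 4 * e * x ^ 3) * iteratedDeriv 2 φ x) := by
    funext x
    have h := hErec 2 (by norm_num) 1 x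
    rw [show (1 : ℤ) - 1 = 0 from rfl, show (1 : ℤ) + 1 = 2 from rfl, h20, h22, hφ1] at h
    rw [h]; erw [(((cubicHD b (2 * c) (3 * d) (4 * e) x).mul (hDφ 1 x)).neg).deriv]
    norm_num
    ring
  have h35 : E 3 5 = fun _ => (0 : ℂ) := by
    funext x
    have h := hErec 2 (by norm_num) 5 x
    rw [show (5 : ℤ) - 1 = 4 from rfl, show (5 : ℤ) + 1 = 6 from rfl,
      h2z 4 (by decide) (by decide), h2z 6 (by decide) (by decide), deriv_const] at h
    rw [h]; ring
  -- level 4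
  have h44 : E 4 4 = fun _ => 24 * e := by
    funext x
    have h := hErec 3 (by norm_num) 4 x
    rw [show (4 : ℤ) - 1 = 3 from rfl, show (4 : ℤ) + 1 = 5 from rfl, h33, h35] at h
    rw [h, (linHD (6 * d) (24 * e) x).deriv]
    push_cast; ring
  have h42 : E 4 2 = fun x =>
      -(6 * ((6 * d + 24 * e * x) * iteratedDeriv 1 φ x)
        + 4 * ((2 * c + 6 * d * x + 12 * e * x ^ 2) * iteratedDeriv 2 φ x)
        + (b + 2 * c * x + 3 * d * x ^ 2 + 4 * e * x ^ 3) * iteratedDeriv 3 φ x) := by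
    funext x
    have h := hErec 3 (by norm_num) 2 x
    rw [show (2 : ℤ) - 1 = 1 from rfl, show (2 : ℤ) + 1 = 3 from rfl, h31, h33, hφ1] at h
    have hd := ((((quadHD (2 * c) (6 * d) (12 * e) x).mul (hDφ 1 x)).const_mul 3).add
        ((cubicHD b (2 * c) (3 * d) (4 * e) x).mul (hDφ 2 x))).neg
    rw [h]; erw [hd.deriv]
    norm_num
    ring
  -- level 5
  have h53 : ∀ x : ℂ, E 5 3 x =
      -((4 * e * x ^ 3 + 3 * d * x ^ 2 + 2 * c * x + b) * iteratedDeriv 4 φ x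
        + (60 * e * x ^ 2 + 30 * d * x + 10 * c) * iteratedDeriv 3 φ x
        + (240 * e * x + 60 * d) * iteratedDeriv 2 φ x
        + 240 * e * deriv φ x) := by
    intro x
    have h := hErec 4 (by norm_num) 3 x
    rw [show (3 : ℤ) - 1 = 2 from rfl, show (3 : ℤ) + 1 = 4 from rfl, h42, h44] at h
    have hd := (((((linHD (6 * d) (24 * e) x).mul (hDφ 1 x)).const_mul 6).add
        (((quadHD (2 * c) (6 * d) (12 * e) x).mul (hDφ 2 x)).const_mul 4)).add
        ((cubicHD b (2 * c) (3 * d) (4 * e) x).mul (hDφ 3 x))).neg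
    rw [h]; erw [hd.deriv]
    norm_num [← hφ1]
    ring
  constructor
  · intro h x
    have h0 := h x
    rw [h53 x] at h0
    exact neg_eq_zero.mp h0
  · intro h x
    rw [h53 x, h x, neg_zero]
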